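/- Let k1 ≤ k2 ≤ m ≤ n be positive integers and let X be a nonnegative real m×n matrix. (i) If M1 is a k1×k1 submatrix of X (given by a set of k1 rows and k1 columns) that contains a k1-assignment achieving min_{k1}(X), then there exist a set of k2 rows containing the rows of M1 and a set of k2 columns containing the columns of M1 such that the corresponding k2×k2 submatrix M2 contains a k2-assignment achieving min_{k2}(X). (ii) Conversely, if M2 is a k2×k2 submatrix of X containing a k2-assignment achieving min_{k2}(X), then there is a k1×k1 submatrix M1 of M2 containing a k1-assignment achieving min_{k1}(X). -/

import Mathlib

open Finset

/-- A `k`-assignment of an `m × n` matrix (indexed by naturals, rows `< m`, columns `< n`):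
a set of `k` positions, no two in the same row or column. -/
def IsAssign (m n k : ℕ) (S : Finset (ℕ × ℕ)) : Prop :=
  S.card = k ∧ (∀ p ∈ S, p.1 < m ∧ p.2 < n) ∧
    ∀ p ∈ S, ∀ q ∈ S, p ≠ q → p.1 ≠ q.1 ∧ p.2 ≠ q.2

/-- The value of a set of positions in the matrix `X`. -/
def aval (X : ℕ → ℕ → ℝ) (S : Finset (ℕ × ℕ)) : ℝ := ∑ p ∈ S, X p.1 p.2

/-- `S` is a `k`-assignment achieving the minimum value `min_k(X)`. -/
def MinAssign (m n k : ℕ) (X : ℕ → ℕ → ℝ) (S : Finset (ℕ × ℕ)) : Prop :=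
  IsAssign m n k S ∧ ∀ T, IsAssign m n k T → aval X S ≤ aval X T

abbrev Cell := ℕ × ℕ

/-- pairwise injective (partial matching) -/
def PInj (S : Finset Cell) : Prop :=
  ∀ p ∈ S, ∀ q ∈ S, p ≠ q → p.1 ≠ q.1 ∧ p.2 ≠ q.2

def rset (S : Finset Cell) : Finset ℕ := S.image Prod.fst
def cset (S : Finset Cell) : Finset ℕ := S.image Prod.snd

lemma PInj.mono {S T : Finset Cell} (h : PInj S) (hts : T ⊆ S) : PInj T :=
  fun p hp q hq hpq => h p (hts hp) q (hts hq) hpq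

lemma mem_rset {S : Finset Cell} {i : ℕ} : i ∈ rset S ↔ ∃ c ∈ S, c.1 = i := by
  simp [rset]

lemma mem_cset {S : Finset Cell} {j : ℕ} : j ∈ cset S ↔ ∃ c ∈ S, c.2 = j := by
  simp [cset]

lemma mem_rset_of {S : Finset Cell} {c : Cell} (h : c ∈ S) : c.1 ∈ rset S :=
  mem_rset.2 ⟨c, h, rfl⟩
lemma mem_cset_of {S : Finset Cell} {c : Cell} (h : c ∈ S) : c.2 ∈ cset S :=
  mem_cset.2 ⟨c, h, rfl⟩

lemma rset_card {S : Finset Cell} (h : PInj S) : (rset S).card = S.card := by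
  apply Finset.card_image_of_injOn
  intro p hp q hq hpq
  by_contra hne
  exact (h p hp q hq hne).1 hpq

lemma cset_card {S : Finset Cell} (h : PInj S) : (cset S).card = S.card := by
  apply Finset.card_image_of_injOn
  intro p hp q hq hpq
  by_contra hne
  exact (h p hp q hq hne).2 hpq

lemma rset_union {S T : Finset Cell} : rset (S ∪ T) = rset S ∪ rset T :=
  Finset.image_union _ _
lemma cset_union {S T : Finset Cell} : cset (S ∪ T) = cset S ∪ cset T :=
  Finset.image_union _ _
lemma rset_mono {S T : Finset Cell} (h : S ⊆ T) : rset S ⊆ rset T :=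
  Finset.image_subset_image h
lemma cset_mono {S T : Finset Cell} (h : S ⊆ T) : cset S ⊆ cset T :=
  Finset.image_subset_image h

/-- the cell of B in row i, if any -/
noncomputable def rcell (B : Finset Cell) (i : ℕ) : Option Cell :=
  (B.filter (fun p => p.1 = i)).toList.head?
/-- the cell of A in column j, if any -/
noncomputable def ccell (A : Finset Cell) (j : ℕ) : Option Cell :=
  (A.filter (fun p => p.2 = j)).toList.head?

lemma rcell_mem {B : Finset Cell} {i : ℕ} {c : Cell} (h : rcell B i = some c) :
    c ∈ B ∧ c.1 = i := by
  have h2 : c ∈ B.filter (fun p => p.1 = i) := by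
    rw [← Finset.mem_toList]
    exact List.mem_of_mem_head? h
  simpa using h2

lemma ccell_mem {A : Finset Cell} {j : ℕ} {c : Cell} (h : ccell A j = some c) :
    c ∈ A ∧ c.2 = j := by
  have h2 : c ∈ A.filter (fun p => p.2 = j) := by
    rw [← Finset.mem_toList]
    exact List.mem_of_mem_head? h
  simpa using h2

lemma rcell_eq_some {B : Finset Cell} (hB : PInj B) {c : Cell} (hc : c ∈ B) :
    rcell B c.1 = some c := by
  have : B.filter (fun p => p.1 = c.1) = {c} := by
    apply Finset.eq_singleton_iff_unique_mem.2
    refine ⟨by simp [hc], ?_⟩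
    intro x hx
    simp only [Finset.mem_filter] at hx
    by_contra hne
    exact (hB x hx.1 c hc hne).1 hx.2
  rw [rcell, this, Finset.toList_singleton]
  rfl

lemma ccell_eq_some {A : Finset Cell} (hA : PInj A) {c : Cell} (hc : c ∈ A) :
    ccell A c.2 = some c := by
  have : A.filter (fun p => p.2 = c.2) = {c} := by
    apply Finset.eq_singleton_iff_unique_mem.2
    refine ⟨by simp [hc], ?_⟩
    intro x hx
    simp only [Finset.mem_filter] at hx
    by_contra hne
    exact (hA x hx.1 c hc hne).2 hx.2
  rw [ccell, this, Finset.toList_singleton]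
  rfl

lemma rcell_none {B : Finset Cell} {i : ℕ} (h : rcell B i = none) : i ∉ rset B := by
  intro hi
  obtain ⟨c, hc, rfl⟩ := mem_rset.1 hi
  have : (B.filter (fun p => p.1 = c.1)).toList ≠ [] := by
    simp only [ne_eq, Finset.toList_eq_nil]
    intro he
    have : c ∈ B.filter (fun p => p.1 = c.1) := by simp [hc]
    rw [he] at this; simp at this
  rw [rcell, List.head?_eq_none_iff] at h
  exact this h

lemma ccell_none {A : Finset Cell} {j : ℕ} (h : ccell A j = none) : j ∉ cset A := by
  intro hj
  obtain ⟨c, hc, rfl⟩ := mem_cset.1 hj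
  have : (A.filter (fun p => p.2 = c.2)).toList ≠ [] := by
    simp only [ne_eq, Finset.toList_eq_nil]
    intro he
    have : c ∈ A.filter (fun p => p.2 = c.2) := by simp [hc]
    rw [he] at this; simp at this
  rw [ccell, List.head?_eq_none_iff] at h
  exact this h

-- ============ walk ============

noncomputable def wnext (A B : Finset Cell) : Cell × Bool → Option (Cell × Bool)
  | (c, true) => (ccell A c.2).map (fun a => (a, false))
  | (c, false) => (rcell B c.1).map (fun b => (b, true))

noncomputable def witer (A B : Finset Cell) (c₀ : Cell) : ℕ → Option (Cell × Bool)
  | 0 => some (c₀, true)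
  | n+1 => (witer A B c₀ n).bind (wnext A B)

def WVal (A B : Finset Cell) (x : Cell × Bool) : Prop :=
  if x.2 then x.1 ∈ B else x.1 ∈ A

lemma wval_step {A B : Finset Cell} {x y : Cell × Bool} (h : wnext A B x = some y) :
    WVal A B y := by
  obtain ⟨c, s⟩ := x
  cases s <;> simp only [wnext, Option.map_eq_some_iff] at h <;> obtain ⟨a, ha, rfl⟩ := h
  · exact (rcell_mem ha).1
  · exact (ccell_mem ha).1

lemma wval_iter {A B : Finset Cell} {c₀ : Cell} (hc₀ : c₀ ∈ B) {n : ℕ} {x : Cell × Bool}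
    (h : witer A B c₀ n = some x) : WVal A B x := by
  induction n generalizing x with
  | zero => simp only [witer] at h; cases h; exact hc₀
  | succ n ih =>
    simp only [witer, Option.bind_eq_some_iff] at h
    obtain ⟨y, hy, hxy⟩ := h
    exact wval_step hxy

lemma wside_parity {A B : Finset Cell} {c₀ : Cell} {n : ℕ} {c : Cell} {s : Bool}
    (h : witer A B c₀ n = some (c, s)) : s = (n % 2 = 0 : Bool) := by
  induction n generalizing c s with
  | zero => simp only [witer] at h; cases h; rfl
  | succ n ih =>
    simp only [witer, Option.bind_eq_some_iff] at h
    obtain ⟨⟨d, t⟩, hy, hxy⟩ := h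
    have ht := ih hy
    cases t <;> cases s <;>
      simp only [wnext, Option.map_eq_some_iff] at hxy
    · obtain ⟨a, _, h2⟩ := hxy; simp at h2
    · have : ¬ (n % 2 = 0) := by simpa using ht.symm
      have : (n+1) % 2 = 0 := by omega
      simp [this]
    · have : n % 2 = 0 := by simpa using ht.symm
      have : ¬ ((n+1) % 2 = 0) := by omega
      simp [this]
    · obtain ⟨a, _, h2⟩ := hxy; simp at h2

lemma wnext_inj {A B : Finset Cell} (hA : PInj A) (hB : PInj B) {x y z : Cell × Bool}
    (hx : WVal A B x) (hy : WVal A B y)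
    (h1 : wnext A B x = some z) (h2 : wnext A B y = some z) : x = y := by
  obtain ⟨c, s⟩ := x; obtain ⟨d, t⟩ := y
  cases s <;> cases t <;>
    simp only [wnext, Option.map_eq_some_iff] at h1 h2 <;>
    obtain ⟨a, ha, rfl⟩ := h1 <;> obtain ⟨b, hb, hz⟩ := h2
  · have : b = a := by cases hz; rfl
    subst this
    have h3 := rcell_mem ha; have h4 := rcell_mem hb
    simp only [WVal, if_neg] at hx hy
    have : c = d := by
      by_contra hne
      exact (hA c hx d hy hne).1 (h3.2.symm.trans h4.2)
    simp [this]
  · exact absurd hz (by simp)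
  · exact absurd hz (by simp)
  · have : b = a := by cases hz; rfl
    subst this
    have h3 := ccell_mem ha; have h4 := ccell_mem hb
    simp only [WVal, if_pos] at hx hy
    have : c = d := by
      by_contra hne
      exact (hB c hx d hy hne).2 (h3.2.symm.trans h4.2)
    simp [this]

lemma wnext_not_start {A B : Finset Cell} {c₀ : Cell} (hu : c₀.1 ∉ rset A)
    {x : Cell × Bool} (hx : WVal A B x) : wnext A B x ≠ some (c₀, true) := by
  obtain ⟨c, s⟩ := x
  cases s <;> simp only [wnext, Option.map_eq_some_iff, ne_eq]
  · rintro ⟨a, ha, h2⟩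
    have h3 := rcell_mem ha
    have h4 : c.1 = c₀.1 := by cases h2; exact h3.2.symm ▸ rfl
    simp only [WVal, if_neg] at hx
    exact hu (h4 ▸ mem_rset_of hx)
  · rintro ⟨a, _, h2⟩; simp at h2

lemma witer_cross {A B : Finset Cell} (hA : PInj A) (hB : PInj B) {c₀ d₀ : Cell}
    (hc₀ : c₀ ∈ B) (hu : c₀.1 ∉ rset A) (hd₀ : d₀ ∈ B) (hv : d₀.1 ∉ rset A) :
    ∀ p q z, witer A B c₀ p = some z → witer A B d₀ q = some z → c₀ = d₀ ∧ p = q := by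
  intro p
  induction p with
  | zero =>
    intro q z h1 h2
    cases q with
    | zero =>
      simp only [witer] at h1 h2
      rw [← h2] at h1; cases h1; exact ⟨rfl, rfl⟩
    | succ q =>
      simp only [witer, Option.bind_eq_some_iff] at h1 h2
      obtain ⟨y, hy, hxy⟩ := h2
      rw [← h1] at hxy
      exact absurd hxy (wnext_not_start hu (wval_iter hd₀ hy))
  | succ p ih =>
    intro q z h1 h2
    cases q with
    | zero =>
      simp only [witer, Option.bind_eq_some_iff] at h1 h2
      obtain ⟨y, hy, hxy⟩ := h1
      rw [← h2] at hxy
      exact absurd hxy (wnext_not_start hv (wval_iter hc₀ hy))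
    | succ q =>
      simp only [witer, Option.bind_eq_some_iff] at h1 h2
      obtain ⟨y, hy, hxy⟩ := h1
      obtain ⟨y', hy', hxy'⟩ := h2
      have : y = y' := wnext_inj hA hB (wval_iter hc₀ hy) (wval_iter hd₀ hy') hxy hxy'
      subst this
      obtain ⟨he, hpq⟩ := ih q y hy hy'
      exact ⟨he, by omega⟩

lemma witer_inj {A B : Finset Cell} (hA : PInj A) (hB : PInj B) {c₀ : Cell}
    (hc₀ : c₀ ∈ B) (hu : c₀.1 ∉ rset A) {p q : ℕ} {z : Cell × Bool}
    (h1 : witer A B c₀ p = some z) (h2 : witer A B c₀ q = some z) : p = q :=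
  (witer_cross hA hB hc₀ hu hc₀ hu p q z h1 h2).2

lemma witer_none_succ {A B : Finset Cell} {c₀ : Cell} {n : ℕ}
    (h : witer A B c₀ n = none) : witer A B c₀ (n+1) = none := by
  simp [witer, h]

lemma witer_isSome_mono {A B : Finset Cell} {c₀ : Cell} {p q : ℕ} (h : p ≤ q)
    (hq : (witer A B c₀ q).isSome) : (witer A B c₀ p).isSome := by
  induction q with
  | zero => cases Nat.le_zero.1 h; exact hq
  | succ q ih =>
    rcases Nat.lt_or_ge p (q+1) with hlt | hge
    · apply ih (by omega)
      cases he : witer A B c₀ q with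
      | none => rw [witer_none_succ he] at hq; simp at hq
      | some x => simp
    · have : p = q+1 := by omega
      subst this; exact hq

lemma witer_exists_none {A B : Finset Cell} (hA : PInj A) (hB : PInj B) {c₀ : Cell}
    (hc₀ : c₀ ∈ B) (hu : c₀.1 ∉ rset A) : ∃ n, witer A B c₀ n = none := by
  by_contra h
  push_neg at h
  set K := ((A ∪ B) ×ˢ (Finset.univ : Finset Bool)).card with hK
  have hmaps : ∀ n ∈ Finset.range (K+1),
      (witer A B c₀ n).getD (c₀, true) ∈ (A ∪ B) ×ˢ (Finset.univ : Finset Bool) := by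
    intro n _
    cases he : witer A B c₀ n with
    | none => exact absurd he (h n)
    | some x =>
      have hv := wval_iter hc₀ he
      obtain ⟨c, s⟩ := x
      simp only [Option.getD_some, Finset.mem_product, Finset.mem_univ, and_true]
      cases s
      · simp only [WVal, if_neg] at hv; exact Finset.mem_union_left _ hv
      · simp only [WVal, if_pos] at hv; exact Finset.mem_union_right _ hv
  have hlt : K < (Finset.range (K+1)).card := by simp
  obtain ⟨p, hp, q, hq, hpq, heq⟩ :=
    Finset.exists_ne_map_eq_of_card_lt_of_maps_to (by rw [hK] at hlt ⊢; exact hlt) hmaps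
  cases hep : witer A B c₀ p with
  | none => exact absurd hep (h p)
  | some x =>
    cases heq' : witer A B c₀ q with
    | none => exact absurd heq' (h q)
    | some y =>
      rw [hep, heq'] at heq
      simp only [Option.getD_some] at heq
      subst heq
      exact hpq (witer_inj hA hB hc₀ hu hep heq')


-- ============ walk endpoints and packaging ============

noncomputable def wlen (A B : Finset Cell) (c₀ : Cell) : ℕ :=
  sInf {n | witer A B c₀ n = none}
noncomputable def wN (A B : Finset Cell) (c₀ : Cell) : ℕ := wlen A B c₀ - 1
noncomputable def wcell (A B : Finset Cell) (c₀ : Cell) (n : ℕ) : Cell :=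
  ((witer A B c₀ n).getD ((0,0), true)).1
noncomputable def wend (A B : Finset Cell) (c₀ : Cell) : Cell :=
  wcell A B c₀ (wN A B c₀)

section Pack

variable {A B : Finset Cell} {c₀ : Cell}

lemma wlen_none (hA : PInj A) (hB : PInj B) (hc₀ : c₀ ∈ B) (hu : c₀.1 ∉ rset A) :
    witer A B c₀ (wlen A B c₀) = none :=
  Nat.sInf_mem (witer_exists_none hA hB hc₀ hu)

lemma wlen_min {m : ℕ} (hm : m < wlen A B c₀) : witer A B c₀ m ≠ none :=
  Nat.notMem_of_lt_sInf hm

lemma wlen_pos (hA : PInj A) (hB : PInj B) (hc₀ : c₀ ∈ B) (hu : c₀.1 ∉ rset A) :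
    0 < wlen A B c₀ := by
  rcases Nat.eq_zero_or_pos (wlen A B c₀) with h | h
  · exfalso
    have h0 : witer A B c₀ 0 = some (c₀, true) := rfl
    have := wlen_none hA hB hc₀ hu
    rw [h, h0] at this
    exact absurd this (by simp)
  · exact h

lemma wN_succ (hA : PInj A) (hB : PInj B) (hc₀ : c₀ ∈ B) (hu : c₀.1 ∉ rset A) :
    wN A B c₀ + 1 = wlen A B c₀ := by
  have := wlen_pos hA hB hc₀ hu
  simp only [wN]; omega

lemma witer_le_N (hA : PInj A) (hB : PInj B) (hc₀ : c₀ ∈ B) (hu : c₀.1 ∉ rset A)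
    {n : ℕ} (hn : n ≤ wN A B c₀) : witer A B c₀ n ≠ none := by
  apply wlen_min
  have := wN_succ hA hB hc₀ hu
  omega

lemma wcell_spec (hA : PInj A) (hB : PInj B) (hc₀ : c₀ ∈ B) (hu : c₀.1 ∉ rset A)
    {n : ℕ} (hn : n ≤ wN A B c₀) :
    witer A B c₀ n = some (wcell A B c₀ n, (n % 2 = 0 : Bool)) := by
  cases he : witer A B c₀ n with
  | none => exact absurd he (witer_le_N hA hB hc₀ hu hn)
  | some x =>
    obtain ⟨c, s⟩ := x
    have := wside_parity he
    subst this
    simp [wcell, he]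

lemma witer_N_none (hA : PInj A) (hB : PInj B) (hc₀ : c₀ ∈ B) (hu : c₀.1 ∉ rset A) :
    witer A B c₀ (wN A B c₀ + 1) = none := by
  rw [wN_succ hA hB hc₀ hu]; exact wlen_none hA hB hc₀ hu


variable (hA : PInj A) (hB : PInj B) (hc₀ : c₀ ∈ B) (hu : c₀.1 ∉ rset A)

lemma wcell_zero : wcell A B c₀ 0 = c₀ := by simp [wcell, witer]

include hA hB hc₀ hu

lemma wcell_memB {n : ℕ} (hn : n ≤ wN A B c₀) (hpar : n % 2 = 0) :
    wcell A B c₀ n ∈ B := by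
  have h := wcell_spec hA hB hc₀ hu hn
  have hv := wval_iter hc₀ h
  simpa [WVal, hpar] using hv

lemma wcell_memA {n : ℕ} (hn : n ≤ wN A B c₀) (hpar : n % 2 = 1) :
    wcell A B c₀ n ∈ A := by
  have h := wcell_spec hA hB hc₀ hu hn
  have hv := wval_iter hc₀ h
  simpa [WVal, Nat.mod_two_ne_zero.mpr hpar, (by omega : ¬ (n % 2 = 0))] using hv

/-- even step: next cell is in `A` sharing the column -/
lemma wstep_col {n : ℕ} (hn : n + 1 ≤ wN A B c₀) (hpar : n % 2 = 0) :
    (wcell A B c₀ (n+1)).2 = (wcell A B c₀ n).2 ∧ wcell A B c₀ (n+1) ∈ A := by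
  have h1 := wcell_spec hA hB hc₀ hu (Nat.le_of_succ_le hn)
  have h2 := wcell_spec hA hB hc₀ hu hn
  have hsd : (decide (n % 2 = 0)) = true := by simp [hpar]
  have hsd2 : (decide ((n+1) % 2 = 0)) = false := by simp; omega
  rw [hsd] at h1
  rw [hsd2] at h2
  rw [show witer A B c₀ (n+1) = (witer A B c₀ n).bind (wnext A B) from rfl, h1,
    Option.bind_some] at h2
  rw [show wnext A B (wcell A B c₀ n, true)
      = (ccell A (wcell A B c₀ n).2).map (fun a => (a, false)) from rfl] at h2
  rw [Option.map_eq_some_iff] at h2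
  rcases h2 with ⟨a, ha, h3⟩
  have h4 := ccell_mem ha
  have : a = wcell A B c₀ (n+1) := by cases h3; rfl
  subst this
  exact ⟨h4.2, h4.1⟩

/-- odd step: next cell is in `B` sharing the row -/
lemma wstep_row {n : ℕ} (hn : n + 1 ≤ wN A B c₀) (hpar : n % 2 = 1) :
    (wcell A B c₀ (n+1)).1 = (wcell A B c₀ n).1 ∧ wcell A B c₀ (n+1) ∈ B := by
  have h1 := wcell_spec hA hB hc₀ hu (Nat.le_of_succ_le hn)
  have h2 := wcell_spec hA hB hc₀ hu hn
  have hsd : (decide (n % 2 = 0)) = false := by simp; omega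
  have hsd2 : (decide ((n+1) % 2 = 0)) = true := by simp; omega
  rw [hsd] at h1
  rw [hsd2] at h2
  rw [show witer A B c₀ (n+1) = (witer A B c₀ n).bind (wnext A B) from rfl, h1,
    Option.bind_some] at h2
  rw [show wnext A B (wcell A B c₀ n, false)
      = (rcell B (wcell A B c₀ n).1).map (fun b => (b, true)) from rfl] at h2
  rw [Option.map_eq_some_iff] at h2
  rcases h2 with ⟨a, ha, h3⟩
  have h4 := rcell_mem ha
  have : a = wcell A B c₀ (n+1) := by cases h3; rfl
  subst this
  exact ⟨h4.2, h4.1⟩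

/-- same parity cells are injective in the index -/
lemma wcell_inj {n n' : ℕ} (hn : n ≤ wN A B c₀) (hn' : n' ≤ wN A B c₀)
    (hpar : n % 2 = n' % 2) (he : wcell A B c₀ n = wcell A B c₀ n') : n = n' := by
  have h1 := wcell_spec hA hB hc₀ hu hn
  have h2 := wcell_spec hA hB hc₀ hu hn'
  rw [he] at h1
  rw [show ((n % 2 = 0 : Bool)) = ((n' % 2 = 0 : Bool)) by simp [hpar]] at h1
  exact witer_inj hA hB hc₀ hu h1 h2

/-- walk cells avoid `A ∩ B` -/
lemma wcell_avoid {n : ℕ} (hn : n ≤ wN A B c₀) :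
    ¬ (wcell A B c₀ n ∈ A ∧ wcell A B c₀ n ∈ B) := by
  rintro ⟨hmA, hmB⟩
  set c := wcell A B c₀ n with hc
  have h1 := wcell_spec hA hB hc₀ hu hn
  -- one more step stays at c with flipped side, and again back
  have step1 : ∀ s : Bool, wnext A B (c, s) = some (c, !s) := by
    intro s
    cases s
    · simp only [wnext, rcell_eq_some hB hmB]; rfl
    · simp only [wnext, ccell_eq_some hA hmA]; rfl
  have h2 : witer A B c₀ (n+1) = some (c, !((n % 2 = 0 : Bool))) := by
    rw [show witer A B c₀ (n+1) = (witer A B c₀ n).bind (wnext A B) from rfl, h1,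
      Option.bind_some, step1]
  have h3 : witer A B c₀ (n+2) = some (c, (n % 2 = 0 : Bool)) := by
    rw [show witer A B c₀ (n+2) = (witer A B c₀ (n+1)).bind (wnext A B) from rfl, h2,
      Option.bind_some, step1]
    simp
  have := witer_inj hA hB hc₀ hu h1 h3
  omega

/-- end condition, B-end -/
lemma wend_B (hpar : wN A B c₀ % 2 = 0) : (wend A B c₀).2 ∉ cset A := by
  have h1 := wcell_spec hA hB hc₀ hu (le_refl (wN A B c₀))
  have h2 := witer_N_none hA hB hc₀ hu
  have hsd : (decide (wN A B c₀ % 2 = 0)) = true := by simp [hpar]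
  rw [hsd] at h1
  rw [show witer A B c₀ (wN A B c₀ + 1) = (witer A B c₀ (wN A B c₀)).bind (wnext A B) from rfl,
    h1, Option.bind_some] at h2
  rw [show wnext A B (wcell A B c₀ (wN A B c₀), true)
      = (ccell A (wcell A B c₀ (wN A B c₀)).2).map (fun a => (a, false)) from rfl] at h2
  rw [Option.map_eq_none_iff] at h2
  exact ccell_none h2

/-- end condition, A-end -/
lemma wend_A (hpar : wN A B c₀ % 2 = 1) : (wend A B c₀).1 ∉ rset B := by
  have h1 := wcell_spec hA hB hc₀ hu (le_refl (wN A B c₀))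
  have h2 := witer_N_none hA hB hc₀ hu
  have hsd : (decide (wN A B c₀ % 2 = 0)) = false := by simp; omega
  rw [hsd] at h1
  rw [show witer A B c₀ (wN A B c₀ + 1) = (witer A B c₀ (wN A B c₀)).bind (wnext A B) from rfl,
    h1, Option.bind_some] at h2
  rw [show wnext A B (wcell A B c₀ (wN A B c₀), false)
      = (rcell B (wcell A B c₀ (wN A B c₀)).1).map (fun b => (b, true)) from rfl] at h2
  rw [Option.map_eq_none_iff] at h2
  exact rcell_none h2

end Pack


-- ============ path sets and full package ============

lemma PInj.eq_row {S : Finset Cell} (h : PInj S) {p q : Cell} (hp : p ∈ S) (hq : q ∈ S)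
    (e : p.1 = q.1) : p = q := by
  by_contra hne; exact (h p hp q hq hne).1 e

lemma PInj.eq_col {S : Finset Cell} (h : PInj S) {p q : Cell} (hp : p ∈ S) (hq : q ∈ S)
    (e : p.2 = q.2) : p = q := by
  by_contra hne; exact (h p hp q hq hne).2 e

lemma filter_mod2_card (N : ℕ) :
    (((Finset.range (N+1)).filter (fun n => n % 2 = 0)).card = (N+2)/2) ∧
    (((Finset.range (N+1)).filter (fun n => n % 2 = 1)).card = (N+1)/2) := by
  induction N with
  | zero =>
    constructor <;> decide
  | succ N ih =>
    rw [Finset.range_add_one, Finset.filter_insert, Finset.filter_insert]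
    rcases Nat.even_or_odd (N+1) with he | ho
    · have h0 : (N+1) % 2 = 0 := Nat.even_iff.1 he
      rw [if_pos h0, if_neg (by omega)]
      rw [Finset.card_insert_of_notMem (by simp)]
      exact ⟨by rw [ih.1]; omega, by rw [ih.2]; omega⟩
    · have h1 : (N+1) % 2 = 1 := Nat.odd_iff.1 ho
      rw [if_neg (by omega), if_pos h1]
      rw [Finset.card_insert_of_notMem (by simp)]
      exact ⟨by rw [ih.1]; omega, by rw [ih.2]; omega⟩

noncomputable def wPB (A B : Finset Cell) (c₀ : Cell) : Finset Cell :=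
  ((Finset.range (wN A B c₀ + 1)).filter (fun n => n % 2 = 0)).image (wcell A B c₀)
noncomputable def wPA (A B : Finset Cell) (c₀ : Cell) : Finset Cell :=
  ((Finset.range (wN A B c₀ + 1)).filter (fun n => n % 2 = 1)).image (wcell A B c₀)

lemma mem_wPB {A B : Finset Cell} {c₀ c : Cell} :
    c ∈ wPB A B c₀ ↔ ∃ n, n ≤ wN A B c₀ ∧ n % 2 = 0 ∧ wcell A B c₀ n = c := by
  simp [wPB, Nat.lt_succ_iff]
  tauto

lemma mem_wPA {A B : Finset Cell} {c₀ c : Cell} :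
    c ∈ wPA A B c₀ ↔ ∃ n, n ≤ wN A B c₀ ∧ n % 2 = 1 ∧ wcell A B c₀ n = c := by
  simp [wPA, Nat.lt_succ_iff]
  tauto

/-- data produced by one alternating walk -/
def WalkOut (A B : Finset Cell) (u : ℕ) (bend : Bool) : Prop :=
  ∃ (PA PB : Finset Cell) (c0 : Cell),
    PA ⊆ A ∧ PB ⊆ B ∧ c0 ∈ PB ∧ c0.1 = u ∧
    (∀ c ∈ PB, c ∉ A) ∧ (∀ c ∈ PA, c ∉ B) ∧
    cset PA ⊆ cset PB ∧ rset PB ⊆ rset PA ∪ {u} ∧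
    PInj ((A \ PA) ∪ PB) ∧ PInj ((B \ PB) ∪ PA) ∧
    (bend = true → PB.card = PA.card + 1 ∧ rset PA ⊆ rset (PB.erase c0) ∧
      ∃ w, w ∉ cset A ∧ cset PB ⊆ cset PA ∪ {w}) ∧
    (bend = false → PB.card = PA.card ∧ cset PB ⊆ cset PA ∧
      ∃ r, r ∉ rset B ∧ rset PA ⊆ rset (PB.erase c0) ∪ {r})

section BigPack
variable {A B : Finset Cell} {c₀ : Cell}
  (hA : PInj A) (hB : PInj B) (hc₀ : c₀ ∈ B) (hu : c₀.1 ∉ rset A)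

include hA hB hc₀ hu

lemma walk_pack : WalkOut A B c₀.1 (decide (wN A B c₀ % 2 = 0)) := by
  set N := wN A B c₀ with hN
  have hPAsub : wPA A B c₀ ⊆ A := by
    intro c hc
    obtain ⟨n, hn, hpar, rfl⟩ := mem_wPA.1 hc
    exact wcell_memA hA hB hc₀ hu hn hpar
  have hPBsub : wPB A B c₀ ⊆ B := by
    intro c hc
    obtain ⟨n, hn, hpar, rfl⟩ := mem_wPB.1 hc
    exact wcell_memB hA hB hc₀ hu hn hpar
  have hc0mem : c₀ ∈ wPB A B c₀ :=
    mem_wPB.2 ⟨0, Nat.zero_le _, rfl, wcell_zero⟩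
  -- avoid A∩B
  have hdB : ∀ c ∈ wPB A B c₀, c ∉ A := by
    intro c hc hcA
    obtain ⟨n, hn, hpar, rfl⟩ := mem_wPB.1 hc
    exact wcell_avoid hA hB hc₀ hu hn ⟨hcA, wcell_memB hA hB hc₀ hu hn hpar⟩
  have hdA : ∀ c ∈ wPA A B c₀, c ∉ B := by
    intro c hc hcB
    obtain ⟨n, hn, hpar, rfl⟩ := mem_wPA.1 hc
    exact wcell_avoid hA hB hc₀ hu hn ⟨wcell_memA hA hB hc₀ hu hn hpar, hcB⟩
  -- cols of PA sit inside cols of PB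
  have hcolsA : cset (wPA A B c₀) ⊆ cset (wPB A B c₀) := by
    intro j hj
    obtain ⟨c, hc, rfl⟩ := mem_cset.1 hj
    obtain ⟨n, hn, hpar, rfl⟩ := mem_wPA.1 hc
    obtain ⟨m, rfl⟩ : ∃ m, n = m + 1 := ⟨n - 1, by omega⟩
    have hst := wstep_col hA hB hc₀ hu (show m+1 ≤ N from hn) (by omega)
    rw [hst.1]
    exact mem_cset_of (mem_wPB.2 ⟨m, by omega, by omega, rfl⟩)
  -- rows of PB sit inside rows of PA ∪ {u}
  have hrowsB : rset (wPB A B c₀) ⊆ rset (wPA A B c₀) ∪ {c₀.1} := by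
    intro i hi
    obtain ⟨c, hc, rfl⟩ := mem_rset.1 hi
    obtain ⟨n, hn, hpar, rfl⟩ := mem_wPB.1 hc
    rcases Nat.eq_zero_or_pos n with rfl | hpos
    · rw [wcell_zero]; exact Finset.mem_union_right _ (Finset.mem_singleton_self _)
    · obtain ⟨m, rfl⟩ : ∃ m, n = m + 1 := ⟨n - 1, by omega⟩
      have hst := wstep_row hA hB hc₀ hu (show m+1 ≤ N from hn) (by omega)
      rw [hst.1]
      exact Finset.mem_union_left _ (mem_rset_of (mem_wPA.2 ⟨m, by omega, by omega, rfl⟩))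
  -- first exchange is a matching
  have hexA : PInj ((A \ wPA A B c₀) ∪ wPB A B c₀) := by
    have key : ∀ p ∈ A \ wPA A B c₀, ∀ q ∈ wPB A B c₀, p.1 ≠ q.1 ∧ p.2 ≠ q.2 := by
      rintro p hp q hq
      rw [Finset.mem_sdiff] at hp
      obtain ⟨n, hn, hpar, rfl⟩ := mem_wPB.1 hq
      constructor
      · intro he
        rcases Nat.eq_zero_or_pos n with rfl | hpos
        · rw [wcell_zero] at he
          exact hu (he ▸ mem_rset_of hp.1)
        · obtain ⟨m, rfl⟩ : ∃ m, n = m + 1 := ⟨n - 1, by omega⟩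
          have hst := wstep_row hA hB hc₀ hu (show m+1 ≤ N from hn) (by omega)
          have hmA : wcell A B c₀ m ∈ A := wcell_memA hA hB hc₀ hu (by omega) (by omega)
          have : p = wcell A B c₀ m := hA.eq_row hp.1 hmA (he.trans hst.1)
          exact hp.2 (this ▸ mem_wPA.2 ⟨m, by omega, by omega, rfl⟩)
      · intro he
        rcases Nat.lt_or_ge n N with hlt | hge
        · have hst := wstep_col hA hB hc₀ hu (show n+1 ≤ N by omega) hpar
          have hmA : wcell A B c₀ (n+1) ∈ A := hst.2
          have : p = wcell A B c₀ (n+1) := hA.eq_col hp.1 hmA (by rw [hst.1]; exact he)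
          exact hp.2 (this ▸ mem_wPA.2 ⟨n+1, by omega, by omega, rfl⟩)
        · have hnN : n = N := by omega
          have hNpar : N % 2 = 0 := hnN ▸ hpar
          have hend := wend_B hA hB hc₀ hu hNpar
          subst hnN
          exact hend (he ▸ mem_cset_of hp.1)
    intro p hp q hq hne
    rw [Finset.mem_union] at hp hq
    rcases hp with hp | hp <;> rcases hq with hq | hq
    · exact hA p (Finset.mem_sdiff.1 hp).1 q (Finset.mem_sdiff.1 hq).1 hne
    · exact key p hp q hq
    · have := key q hq p hp
      exact ⟨this.1.symm, this.2.symm⟩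
    · exact hB p (hPBsub hp) q (hPBsub hq) hne
  -- second exchange is a matching
  have hexB : PInj ((B \ wPB A B c₀) ∪ wPA A B c₀) := by
    have key : ∀ p ∈ B \ wPB A B c₀, ∀ q ∈ wPA A B c₀, p.1 ≠ q.1 ∧ p.2 ≠ q.2 := by
      rintro p hp q hq
      rw [Finset.mem_sdiff] at hp
      obtain ⟨n, hn, hpar, rfl⟩ := mem_wPA.1 hq
      constructor
      · intro he
        rcases Nat.lt_or_ge n N with hlt | hge
        · have hst := wstep_row hA hB hc₀ hu (show n+1 ≤ N by omega) hpar
          have hmB : wcell A B c₀ (n+1) ∈ B := hst.2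
          have : p = wcell A B c₀ (n+1) := hB.eq_row hp.1 hmB (by rw [hst.1]; exact he)
          exact hp.2 (this ▸ mem_wPB.2 ⟨n+1, by omega, by omega, rfl⟩)
        · have hnN : n = N := by omega
          have hNpar : N % 2 = 1 := hnN ▸ hpar
          have hend := wend_A hA hB hc₀ hu hNpar
          subst hnN
          exact hend (he ▸ mem_rset_of hp.1)
      · intro he
        obtain ⟨m, rfl⟩ : ∃ m, n = m + 1 := ⟨n - 1, by omega⟩
        have hst := wstep_col hA hB hc₀ hu (show m+1 ≤ N from hn) (by omega)
        have hmB : wcell A B c₀ m ∈ B := wcell_memB hA hB hc₀ hu (by omega) (by omega)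
        have : p = wcell A B c₀ m := hB.eq_col hp.1 hmB (he.trans hst.1)
        exact hp.2 (this ▸ mem_wPB.2 ⟨m, by omega, by omega, rfl⟩)
    intro p hp q hq hne
    rw [Finset.mem_union] at hp hq
    rcases hp with hp | hp <;> rcases hq with hq | hq
    · exact hB p (Finset.mem_sdiff.1 hp).1 q (Finset.mem_sdiff.1 hq).1 hne
    · exact key p hp q hq
    · have := key q hq p hp
      exact ⟨this.1.symm, this.2.symm⟩
    · exact hA p (hPAsub hp) q (hPAsub hq) hne
  -- cards
  have hcardB : (wPB A B c₀).card = (N+2)/2 := by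
    rw [wPB, Finset.card_image_of_injOn, (filter_mod2_card N).1]
    intro n hn n' hn' he
    simp only [Finset.coe_filter, Set.mem_setOf_eq, Finset.mem_range] at hn hn'
    exact wcell_inj hA hB hc₀ hu (by omega) (by omega) (by omega) he
  have hcardA : (wPA A B c₀).card = (N+1)/2 := by
    rw [wPA, Finset.card_image_of_injOn, (filter_mod2_card N).2]
    intro n hn n' hn' he
    simp only [Finset.coe_filter, Set.mem_setOf_eq, Finset.mem_range] at hn hn'
    exact wcell_inj hA hB hc₀ hu (by omega) (by omega) (by omega) he
  -- rows of PA avoid c₀ when inside PB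
  have hrowsA : ∀ n ≤ N, n % 2 = 1 → n < N →
      (wcell A B c₀ n).1 ∈ rset ((wPB A B c₀).erase c₀) := by
    intro n hn hpar hlt
    have hst := wstep_row hA hB hc₀ hu (show n+1 ≤ N by omega) hpar
    rw [← hst.1]
    apply mem_rset_of
    rw [Finset.mem_erase]
    refine ⟨?_, mem_wPB.2 ⟨n+1, by omega, by omega, rfl⟩⟩
    intro he
    have := wcell_inj hA hB hc₀ hu (show n+1 ≤ N by omega) (Nat.zero_le _)
      (by omega) (he.trans wcell_zero.symm)
    omega
  refine ⟨wPA A B c₀, wPB A B c₀, c₀, hPAsub, hPBsub, hc0mem, rfl, hdB, hdA, hcolsA, hrowsB,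
    hexA, hexB, ?_, ?_⟩
  · intro hbend
    have hNpar : N % 2 = 0 := by simpa using hbend
    refine ⟨by rw [hcardB, hcardA]; omega, ?_, (wend A B c₀).2, wend_B hA hB hc₀ hu hNpar, ?_⟩
    · intro i hi
      obtain ⟨c, hc, rfl⟩ := mem_rset.1 hi
      obtain ⟨n, hn, hpar, rfl⟩ := mem_wPA.1 hc
      exact hrowsA n hn hpar (by omega)
    · intro j hj
      obtain ⟨c, hc, rfl⟩ := mem_cset.1 hj
      obtain ⟨n, hn, hpar, rfl⟩ := mem_wPB.1 hc
      rcases Nat.lt_or_ge n N with hlt | hge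
      · have hst := wstep_col hA hB hc₀ hu (show n+1 ≤ N by omega) hpar
        rw [← hst.1]
        exact Finset.mem_union_left _ (mem_cset_of (mem_wPA.2 ⟨n+1, by omega, by omega, rfl⟩))
      · have : n = N := by omega
        subst this
        exact Finset.mem_union_right _ (Finset.mem_singleton_self _)
  · intro hbend
    have hNpar : N % 2 = 1 := by simp at hbend; omega
    refine ⟨by rw [hcardB, hcardA]; omega, ?_, (wend A B c₀).1, wend_A hA hB hc₀ hu hNpar, ?_⟩
    · intro j hj
      obtain ⟨c, hc, rfl⟩ := mem_cset.1 hj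
      obtain ⟨n, hn, hpar, rfl⟩ := mem_wPB.1 hc
      have hlt : n < N := by omega
      have hst := wstep_col hA hB hc₀ hu (show n+1 ≤ N by omega) hpar
      rw [← hst.1]
      exact mem_cset_of (mem_wPA.2 ⟨n+1, by omega, by omega, rfl⟩)
    · intro i hi
      obtain ⟨c, hc, rfl⟩ := mem_rset.1 hi
      obtain ⟨n, hn, hpar, rfl⟩ := mem_wPA.1 hc
      rcases Nat.lt_or_ge n N with hlt | hge
      · exact Finset.mem_union_left _ (hrowsA n hn hpar hlt)
      · have : n = N := by omega
        subst this
        exact Finset.mem_union_right _ (Finset.mem_singleton_self _)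

end BigPack


-- ============ augmenting walk existence ============

lemma exists_aug {A B : Finset Cell} (hA : PInj A) (hB : PInj B) (h : A.card < B.card) :
    ∃ (QA QB : Finset Cell) (u w : ℕ),
      QA ⊆ A ∧ QB ⊆ B ∧ (∀ c ∈ QB, c ∉ A) ∧ (∀ c ∈ QA, c ∉ B) ∧
      QB.card = QA.card + 1 ∧ PInj ((A \ QA) ∪ QB) ∧ PInj ((B \ QB) ∪ QA) ∧
      cset QA ⊆ cset QB ∧ rset QA ⊆ rset QB ∧
      rset QB ⊆ rset QA ∪ {u} ∧ u ∉ rset A ∧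
      cset QB ⊆ cset QA ∪ {w} ∧ w ∉ cset A := by
  classical
  have hBA : (rset B \ rset A).Nonempty := by
    rw [Finset.sdiff_nonempty]
    intro hsub
    have := Finset.card_le_card hsub
    rw [rset_card hA, rset_card hB] at this
    omega
  -- for u ∈ rset B \ rset A, the canonical start cell
  have hstart : ∀ u ∈ rset B \ rset A, ∃ c₀, rcell B u = some c₀ ∧ c₀ ∈ B ∧ c₀.1 = u ∧
      c₀.1 ∉ rset A := by
    intro u hu
    rw [Finset.mem_sdiff] at hu
    obtain ⟨c, hc, rfl⟩ := mem_rset.1 hu.1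
    exact ⟨c, rcell_eq_some hB hc, hc, rfl, hu.2⟩
  -- find a start whose walk has even length (B-end)
  have hkey : ∃ u ∈ rset B \ rset A, ∃ c₀, rcell B u = some c₀ ∧ c₀ ∈ B ∧ c₀.1 = u ∧
      c₀.1 ∉ rset A ∧ wN A B c₀ % 2 = 0 := by
    by_contra hcon
    push_neg at hcon
    -- every walk is A-ended; map each start to the terminal row
    set f : ℕ → ℕ := fun u => (wend A B ((rcell B u).getD ((0,0) : Cell))).1 with hf
    have hodd : ∀ u ∈ rset B \ rset A, ∀ c₀, rcell B u = some c₀ →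
        wN A B c₀ % 2 = 1 := by
      intro u hu c₀ hrc
      obtain ⟨c₀', hrc', hcB, hcu, hcA⟩ := hstart u hu
      rw [hrc] at hrc'; cases hrc'
      have := hcon u hu c₀ hrc hcB hcu hcA
      omega
    have hmaps : ∀ u ∈ rset B \ rset A, f u ∈ rset A \ rset B := by
      intro u hu
      obtain ⟨c₀, hrc, hcB, hcu, hcA⟩ := hstart u hu
      have hpar := hodd u hu c₀ hrc
      rw [Finset.mem_sdiff, hf]
      simp only [hrc, Option.getD_some]
      constructor
      · exact mem_rset_of (wcell_memA hA hB hcB hcA (le_refl _) hpar)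
      · exact wend_A hA hB hcB hcA hpar
    have hinj : Set.InjOn f ((rset B \ rset A : Finset ℕ) : Set ℕ) := by
      intro u hu v hv he
      rw [Finset.mem_coe] at hu hv
      have hu' : u ∈ rset B \ rset A := hu
      have hv' : v ∈ rset B \ rset A := hv
      obtain ⟨c₀, hrc, hcB, hcu, hcA⟩ := hstart u hu'
      obtain ⟨d₀, hrd, hdB, hdv, hdA⟩ := hstart v hv'
      have hpu := hodd u hu' c₀ hrc
      have hpv := hodd v hv' d₀ hrd
      rw [hf] at he
      simp only [hrc, hrd, Option.getD_some] at he
      have heu : wend A B c₀ ∈ A := wcell_memA hA hB hcB hcA (le_refl _) hpu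
      have hev : wend A B d₀ ∈ A := wcell_memA hA hB hdB hdA (le_refl _) hpv
      have hee : wend A B c₀ = wend A B d₀ := hA.eq_row heu hev he
      have h1 := wcell_spec hA hB hcB hcA (le_refl (wN A B c₀))
      have h2 := wcell_spec hA hB hdB hdA (le_refl (wN A B d₀))
      rw [show (decide (wN A B c₀ % 2 = 0)) = false by simp; omega] at h1
      rw [show (decide (wN A B d₀ % 2 = 0)) = false by simp; omega] at h2
      rw [show wcell A B c₀ (wN A B c₀) = wend A B c₀ from rfl, hee] at h1
      rw [show wcell A B d₀ (wN A B d₀) = wend A B d₀ from rfl] at h2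
      have := (witer_cross hA hB hcB hcA hdB hdA _ _ _ h1 h2).1
      rw [← hcu, ← hdv, this]
    have hle := Finset.card_le_card_of_injOn f (fun u hu => hmaps u hu) hinj
    have e1 : (rset B \ rset A).card + (rset B ∩ rset A).card = (rset B).card :=
      Finset.card_sdiff_add_card_inter _ _
    have e2 : (rset A \ rset B).card + (rset A ∩ rset B).card = (rset A).card :=
      Finset.card_sdiff_add_card_inter _ _
    have e3 : (rset B ∩ rset A).card = (rset A ∩ rset B).card := by
      rw [Finset.inter_comm]
    rw [rset_card hA] at e2
    rw [rset_card hB] at e1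
    omega
  obtain ⟨u, hu, c₀, hrc, hcB, hcu, hcA, hpar⟩ := hkey
  have hpack := walk_pack hA hB hcB hcA
  rw [show (decide (wN A B c₀ % 2 = 0)) = true by simp [hpar]] at hpack
  obtain ⟨PA, PB, c0, hPA, hPB, hc0, hc0u, hdB, hdA, hcolsA, hrowsB, hexA, hexB, hendsB, _⟩ :=
    hpack
  obtain ⟨hcard, hrowsA, w, hwA, hcolsB⟩ := hendsB rfl
  exact ⟨PA, PB, c₀.1, w, hPA, hPB, hdB, hdA, hcard, hexA, hexB, hcolsA,
    fun i hi => rset_mono (Finset.erase_subset _ _) (hrowsA hi),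
    hc0u ▸ hrowsB, hcA, hcolsB, hwA⟩


-- ============ assignments ============

lemma IsAssign.pinj {m n k : ℕ} {S : Finset Cell} (h : IsAssign m n k S) : PInj S := h.2.2

lemma aval_union {X : ℕ → ℕ → ℝ} {U V : Finset Cell} (h : Disjoint U V) :
    aval X (U ∪ V) = aval X U + aval X V := Finset.sum_union h

lemma aval_sdiff {X : ℕ → ℕ → ℝ} {U S : Finset Cell} (h : U ⊆ S) :
    aval X (S \ U) = aval X S - aval X U := Finset.sum_sdiff_eq_sub h

-- transpose
def tr (S : Finset Cell) : Finset Cell := S.image Prod.swap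

lemma tr_tr {S : Finset Cell} : tr (tr S) = S := by
  simp [tr, Finset.image_image, Finset.image_id']

lemma mem_tr {S : Finset Cell} {c : Cell} : c ∈ tr S ↔ (c.2, c.1) ∈ S := by
  simp only [tr, Finset.mem_image, Prod.swap]
  constructor
  · rintro ⟨⟨a, b⟩, hab, rfl⟩; exact hab
  · intro h; exact ⟨(c.2, c.1), h, rfl⟩

lemma tr_card {S : Finset Cell} : (tr S).card = S.card :=
  Finset.card_image_of_injective _ Prod.swap_injective

lemma rset_tr {S : Finset Cell} : rset (tr S) = cset S := by
  ext i
  rw [mem_rset, mem_cset]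
  constructor
  · rintro ⟨c, hc, rfl⟩
    exact ⟨(c.2, c.1), mem_tr.1 hc, rfl⟩
  · rintro ⟨c, hc, rfl⟩
    exact ⟨(c.2, c.1), mem_tr.2 (by simpa using hc), rfl⟩

lemma cset_tr {S : Finset Cell} : cset (tr S) = rset S := by
  ext i
  rw [mem_cset, mem_rset]
  constructor
  · rintro ⟨c, hc, rfl⟩
    exact ⟨(c.2, c.1), mem_tr.1 hc, rfl⟩
  · rintro ⟨c, hc, rfl⟩
    exact ⟨(c.2, c.1), mem_tr.2 (by simpa using hc), rfl⟩

lemma isAssign_tr {m n k : ℕ} {S : Finset Cell} (h : IsAssign m n k S) :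
    IsAssign n m k (tr S) := by
  obtain ⟨h1, h2, h3⟩ := h
  refine ⟨tr_card.trans h1, ?_, ?_⟩
  · intro p hp
    have := h2 _ (mem_tr.1 hp)
    exact ⟨this.2, this.1⟩
  · intro p hp q hq hne
    have := h3 _ (mem_tr.1 hp) _ (mem_tr.1 hq)
      (by intro he; apply hne; have := congrArg Prod.swap he; simpa using this)
    exact ⟨this.2, this.1⟩

lemma aval_tr {X : ℕ → ℕ → ℝ} {S : Finset Cell} :
    aval (fun i j => X j i) (tr S) = aval X S := by
  rw [aval, tr, Finset.sum_image (by intro x _ y _ h; exact Prod.swap_injective h)]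
  rfl

lemma minAssign_tr {m n k : ℕ} {X : ℕ → ℕ → ℝ} {S : Finset Cell}
    (h : MinAssign m n k X S) : MinAssign n m k (fun i j => X j i) (tr S) := by
  refine ⟨isAssign_tr h.1, ?_⟩
  intro T hT
  rw [aval_tr]
  have h2 : aval (fun i j => X j i) T = aval X (tr T) := by
    rw [← aval_tr (X := X) (S := tr T), tr_tr]
  rw [h2]
  exact h.2 _ (isAssign_tr hT)

/-- a minimum `k`-assignment exists when `k ≤ m ≤ n` -/
lemma exists_minAssign {m n k : ℕ} (hkm : k ≤ m) (hmn : m ≤ n) (X : ℕ → ℕ → ℝ) :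
    ∃ T, MinAssign m n k X T := by
  classical
  set 𝒜 := ((Finset.range m ×ˢ Finset.range n).powerset).filter (fun S => IsAssign m n k S)
    with h𝒜
  have hD : ((Finset.range k).image (fun i => ((i, i) : Cell))) ∈ 𝒜 := by
    rw [h𝒜, Finset.mem_filter, Finset.mem_powerset]
    constructor
    · intro c hc
      simp only [Finset.mem_image, Finset.mem_range] at hc
      obtain ⟨i, hi, rfl⟩ := hc
      simp only [Finset.mem_product, Finset.mem_range]
      omega
    · refine ⟨?_, ?_, ?_⟩
      · rw [Finset.card_image_of_injective _ (fun a b h => (Prod.mk.injEq _ _ _ _ ▸ h : _ ∧ _).1),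
          Finset.card_range]
      · intro p hp
        simp only [Finset.mem_image, Finset.mem_range] at hp
        obtain ⟨i, hi, rfl⟩ := hp
        constructor <;> simp <;> omega
      · intro p hp q hq hne
        simp only [Finset.mem_image, Finset.mem_range] at hp hq
        obtain ⟨i, _, rfl⟩ := hp
        obtain ⟨j, _, rfl⟩ := hq
        simp only [ne_eq, Prod.mk.injEq] at hne ⊢
        omega
  obtain ⟨T, hT, hmin⟩ := Finset.exists_min_image 𝒜 (aval X) ⟨_, hD⟩
  rw [h𝒜, Finset.mem_filter] at hT
  refine ⟨T, hT.2, ?_⟩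
  intro T' hT'
  apply hmin
  rw [h𝒜, Finset.mem_filter, Finset.mem_powerset]
  refine ⟨?_, hT'⟩
  intro c hc
  have := hT'.2.1 c hc
  simp only [Finset.mem_product, Finset.mem_range]
  exact this


-- ============ the exchange step ============

lemma PInj_triple {U V W : Finset Cell} (hUV : PInj (U ∪ V)) (hUW : PInj (U ∪ W))
    (hVW : PInj (V ∪ W)) : PInj (U ∪ V ∪ W) := by
  intro p hp q hq hne
  simp only [Finset.mem_union] at hp hq
  rcases hp with (hp | hp) | hp <;> rcases hq with (hq | hq) | hq
  · exact hUV p (Finset.mem_union_left _ hp) q (Finset.mem_union_left _ hq) hne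
  · exact hUV p (Finset.mem_union_left _ hp) q (Finset.mem_union_right _ hq) hne
  · exact hUW p (Finset.mem_union_left _ hp) q (Finset.mem_union_right _ hq) hne
  · exact hUV p (Finset.mem_union_right _ hp) q (Finset.mem_union_left _ hq) hne
  · exact hUV p (Finset.mem_union_right _ hp) q (Finset.mem_union_right _ hq) hne
  · exact hVW p (Finset.mem_union_left _ hp) q (Finset.mem_union_right _ hq) hne
  · exact hUW p (Finset.mem_union_right _ hp) q (Finset.mem_union_left _ hq) hne
  · exact hVW p (Finset.mem_union_right _ hp) q (Finset.mem_union_left _ hq) hne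
  · exact hVW p (Finset.mem_union_right _ hp) q (Finset.mem_union_right _ hq) hne

/-- The main exchange step along the alternating walk from an uncovered row `u` of `S`. -/
lemma step_both_row {m n k₁ k₂ : ℕ} {X : ℕ → ℕ → ℝ} {S T : Finset Cell} (hk : k₁ ≤ k₂)
    (hS : MinAssign m n k₁ X S) (hT : MinAssign m n k₂ X T) {u : ℕ}
    (hu : u ∈ rset S \ rset T) :
    ∃ S' T', MinAssign m n k₁ X S' ∧ MinAssign m n k₂ X T' ∧
      rset S' \ rset T ⊆ (rset S \ rset T).erase u ∧
      cset S' \ cset T ⊆ cset S \ cset T ∧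
      rset S \ rset T' ⊆ (rset S \ rset T).erase u ∧
      cset S \ cset T' ⊆ cset S \ cset T := by
  classical
  have hSp : PInj S := hS.1.pinj
  have hTp : PInj T := hT.1.pinj
  rw [Finset.mem_sdiff] at hu
  obtain ⟨c₀, hc₀S, hc₀u⟩ := mem_rset.1 hu.1
  have hc₀A : c₀.1 ∉ rset T := hc₀u ▸ hu.2
  have hpack := walk_pack hTp hSp hc₀S hc₀A
  rw [hc₀u] at hpack
  obtain ⟨PT, PS, c0, hPT, hPS, hc0PS, hc0u, dS, dT, hcolsPT, hrowsPS, hexT, hexS,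
    hendsB, hendsA⟩ := hpack
  have hScard : S.card = k₁ := hS.1.1
  have hTcard : T.card = k₂ := hT.1.1
  have hSbnd := hS.1.2.1
  have hTbnd := hT.1.2.1
  have hPScard : PS.card ≤ k₁ := hScard ▸ Finset.card_le_card hPS
  have hPTcard : PT.card ≤ k₂ := hTcard ▸ Finset.card_le_card hPT
  have dST1 : Disjoint (S \ PS) PT := by
    rw [Finset.disjoint_right]
    intro c hc hcs
    exact dT c hc (Finset.mem_sdiff.1 hcs).1
  have dTS1 : Disjoint (T \ PT) PS := by
    rw [Finset.disjoint_right]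
    intro c hc hcs
    exact dS c hc (Finset.mem_sdiff.1 hcs).1
  have hu_not_SPS : u ∉ rset (S \ PS) := by
    intro hmem
    obtain ⟨c, hc, hcu⟩ := mem_rset.1 hmem
    rw [Finset.mem_sdiff] at hc
    have : c = c0 := hSp.eq_row hc.1 (hPS hc0PS) (hcu.trans hc0u.symm)
    exact hc.2 (this ▸ hc0PS)
  have huPS : u ∈ rset PS := hc0u ▸ mem_rset_of hc0PS
  rcases Bool.eq_false_or_eq_true (decide (wN T S c₀ % 2 = 0)) with hb | hb
  · -- B-end : S-heavy path, needs an augmenting partner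
    obtain ⟨hcard, hrsPT, w₀, hw₀, hcsPS⟩ := hendsB hb
    set S₁ := S \ PS with hS₁def
    set T₁ := T \ PT with hT₁def
    have hS₁p : PInj S₁ := hSp.mono Finset.sdiff_subset
    have hT₁p : PInj T₁ := hTp.mono Finset.sdiff_subset
    have hlt : S₁.card < T₁.card := by
      rw [hS₁def, hT₁def, Finset.card_sdiff_of_subset hPS, Finset.card_sdiff_of_subset hPT]
      omega
    obtain ⟨QA, QB, u', w, hQA, hQB, dQB, dQA, hQcard, hexQ1, hexQ2, hcsQA, hrsQA,
      hrsQB, hu', hcsQB, hw⟩ := exists_aug hS₁p hT₁p hlt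
    have hQAS : QA ⊆ S := hQA.trans Finset.sdiff_subset
    have hQBT : QB ⊆ T := hQB.trans Finset.sdiff_subset
    have hQAcard : QA.card ≤ S₁.card := Finset.card_le_card hQA
    have hQBcard : QB.card ≤ T₁.card := Finset.card_le_card hQB
    set S' := (S₁ \ QA) ∪ PT ∪ QB with hS'def
    set T' := (T₁ \ QB) ∪ PS ∪ QA with hT'def
    have dS'1 : Disjoint (S₁ \ QA) PT := dST1.mono_left Finset.sdiff_subset
    have dS'2 : Disjoint ((S₁ \ QA) ∪ PT) QB := by
      rw [Finset.disjoint_right]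
      intro c hc hcs
      rw [Finset.mem_union] at hcs
      rcases hcs with hcs | hcs
      · exact dQB c hc (Finset.mem_sdiff.1 hcs).1
      · exact (Finset.mem_sdiff.1 (hQB hc)).2 hcs
    have dT'1 : Disjoint (T₁ \ QB) PS := dTS1.mono_left Finset.sdiff_subset
    have dT'2 : Disjoint ((T₁ \ QB) ∪ PS) QA := by
      rw [Finset.disjoint_right]
      intro c hc hcs
      rw [Finset.mem_union] at hcs
      rcases hcs with hcs | hcs
      · exact dQA c hc (Finset.mem_sdiff.1 hcs).1
      · exact (Finset.mem_sdiff.1 (hQA hc)).2 hcs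
    have hexS' : PInj S' := by
      rw [hS'def]
      apply PInj_triple
      · exact hexS.mono (Finset.union_subset_union_left (Finset.sdiff_subset))
      · exact hexQ1
      · exact hTp.mono (Finset.union_subset hPT hQBT)
    have hexT' : PInj T' := by
      rw [hT'def]
      apply PInj_triple
      · exact hexT.mono (Finset.union_subset_union_left (Finset.sdiff_subset))
      · exact hexQ2
      · exact hSp.mono (Finset.union_subset hPS hQAS)
    have hS'card : S'.card = k₁ := by
      rw [hS'def, Finset.card_union_of_disjoint dS'2, Finset.card_union_of_disjoint dS'1,
        Finset.card_sdiff_of_subset hQA, hS₁def, Finset.card_sdiff_of_subset hPS]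
      rw [hS₁def, Finset.card_sdiff_of_subset hPS] at hQAcard
      omega
    have hT'card : T'.card = k₂ := by
      rw [hT'def, Finset.card_union_of_disjoint dT'2, Finset.card_union_of_disjoint dT'1,
        Finset.card_sdiff_of_subset hQB, hT₁def, Finset.card_sdiff_of_subset hPT]
      rw [hT₁def, Finset.card_sdiff_of_subset hPT] at hQBcard
      omega
    have hS'assign : IsAssign m n k₁ S' := by
      refine ⟨hS'card, ?_, hexS'⟩
      intro p hp
      rw [hS'def, Finset.mem_union, Finset.mem_union] at hp
      rcases hp with (hp | hp) | hp
      · exact hSbnd p (Finset.sdiff_subset (Finset.sdiff_subset hp))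
      · exact hTbnd p (hPT hp)
      · exact hTbnd p (hQBT hp)
    have hT'assign : IsAssign m n k₂ T' := by
      refine ⟨hT'card, ?_, hexT'⟩
      intro p hp
      rw [hT'def, Finset.mem_union, Finset.mem_union] at hp
      rcases hp with (hp | hp) | hp
      · exact hTbnd p (Finset.sdiff_subset (Finset.sdiff_subset hp))
      · exact hSbnd p (hPS hp)
      · exact hSbnd p (hQAS hp)
    have eS' : aval X S' = aval X S - aval X PS - aval X QA + aval X PT + aval X QB := by
      rw [hS'def, aval_union dS'2, aval_union dS'1, aval_sdiff hQA, hS₁def, aval_sdiff hPS]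
    have eT' : aval X T' = aval X T - aval X PT - aval X QB + aval X PS + aval X QA := by
      rw [hT'def, aval_union dT'2, aval_union dT'1, aval_sdiff hQB, hT₁def, aval_sdiff hPT]
    have i1 := hT.2 _ hT'assign
    have i2 := hS.2 _ hS'assign
    have hminS' : MinAssign m n k₁ X S' := by
      refine ⟨hS'assign, fun W hW => ?_⟩
      have : aval X S' = aval X S := by linarith
      rw [this]; exact hS.2 _ hW
    have hminT' : MinAssign m n k₂ X T' := by
      refine ⟨hT'assign, fun W hW => ?_⟩
      have : aval X T' = aval X T := by linarith
      rw [this]; exact hT.2 _ hW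
    have hSsplit : rset S = rset S₁ ∪ rset PS := by
      rw [hS₁def, ← rset_union, Finset.sdiff_union_of_subset hPS]
    have hSsplitc : cset S = cset S₁ ∪ cset PS := by
      rw [hS₁def, ← cset_union, Finset.sdiff_union_of_subset hPS]
    have hPST' : PS ⊆ T' := by
      rw [hT'def]; intro c hc
      exact Finset.mem_union_left _ (Finset.mem_union_right _ hc)
    have hQAT' : QA ⊆ T' := by
      rw [hT'def]; intro c hc
      exact Finset.mem_union_right _ hc
    have hT₁T' : T₁ \ QB ⊆ T' := by
      rw [hT'def]; intro c hc
      exact Finset.mem_union_left _ (Finset.mem_union_left _ hc)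
    refine ⟨S', T', hminS', hminT', ?_, ?_, ?_, ?_⟩
    · intro v hv
      rw [Finset.mem_sdiff] at hv
      have hvS' := hv.1
      rw [hS'def, rset_union, rset_union, Finset.mem_union, Finset.mem_union] at hvS'
      rcases hvS' with (hvS' | hvS') | hvS'
      · rw [Finset.mem_erase]
        have hvS : v ∈ rset S :=
          rset_mono (Finset.sdiff_subset.trans Finset.sdiff_subset) hvS'
        refine ⟨?_, Finset.mem_sdiff.2 ⟨hvS, hv.2⟩⟩
        intro he
        exact hu_not_SPS (he ▸ rset_mono Finset.sdiff_subset hvS')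
      · exact absurd (rset_mono hPT hvS') hv.2
      · exact absurd (rset_mono hQBT hvS') hv.2
    · intro v hv
      rw [Finset.mem_sdiff] at hv
      have hvS' := hv.1
      rw [hS'def, cset_union, cset_union, Finset.mem_union, Finset.mem_union] at hvS'
      rcases hvS' with (hvS' | hvS') | hvS'
      · exact Finset.mem_sdiff.2
          ⟨cset_mono (Finset.sdiff_subset.trans Finset.sdiff_subset) hvS', hv.2⟩
      · exact absurd (cset_mono hPT hvS') hv.2
      · exact absurd (cset_mono hQBT hvS') hv.2
    · intro v hv
      rw [Finset.mem_sdiff] at hv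
      have hvT' : v ∉ rset T' := hv.2
      rw [Finset.mem_erase]
      constructor
      · intro he
        exact hvT' (rset_mono hPST' (he ▸ huPS))
      · refine Finset.mem_sdiff.2 ⟨hv.1, ?_⟩
        intro hvT
        obtain ⟨c, hcT, hcv⟩ := mem_rset.1 hvT
        by_cases hcPT : c ∈ PT
        · have hvm : v ∈ rset PT := hcv ▸ mem_rset_of hcPT
          exact hvT' (rset_mono hPST' (rset_mono (Finset.erase_subset _ _) (hrsPT hvm)))
        · by_cases hcQB : c ∈ QB
          · have hvm : v ∈ rset QB := hcv ▸ mem_rset_of hcQB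
            have h2 := hrsQB hvm
            rw [Finset.mem_union] at h2
            rcases h2 with h2 | h2
            · exact hvT' (rset_mono hQAT' h2)
            · rw [Finset.mem_singleton] at h2
              subst h2
              have h3 := hv.1
              rw [hSsplit, Finset.mem_union] at h3
              rcases h3 with h3 | h3
              · exact hu' h3
              · exact hvT' (rset_mono hPST' h3)
          · exact hvT' (rset_mono hT₁T' (hcv ▸ mem_rset_of
              (Finset.mem_sdiff.2 ⟨Finset.mem_sdiff.2 ⟨hcT, hcPT⟩, hcQB⟩)))
    · intro v hv
      rw [Finset.mem_sdiff] at hv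
      have hvT' : v ∉ cset T' := hv.2
      refine Finset.mem_sdiff.2 ⟨hv.1, ?_⟩
      intro hvT
      obtain ⟨c, hcT, hcv⟩ := mem_cset.1 hvT
      by_cases hcPT : c ∈ PT
      · have hvm : v ∈ cset PT := hcv ▸ mem_cset_of hcPT
        exact hvT' (cset_mono hPST' (hcolsPT hvm))
      · by_cases hcQB : c ∈ QB
        · have hvm : v ∈ cset QB := hcv ▸ mem_cset_of hcQB
          have h2 := hcsQB hvm
          rw [Finset.mem_union] at h2
          rcases h2 with h2 | h2
          · exact hvT' (cset_mono hQAT' h2)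
          · rw [Finset.mem_singleton] at h2
            subst h2
            have h3 := hv.1
            rw [hSsplitc, Finset.mem_union] at h3
            rcases h3 with h3 | h3
            · exact hw h3
            · exact hvT' (cset_mono hPST' h3)
        · exact hvT' (cset_mono hT₁T' (hcv ▸ mem_cset_of
            (Finset.mem_sdiff.2 ⟨Finset.mem_sdiff.2 ⟨hcT, hcPT⟩, hcQB⟩)))
  · -- A-end : balanced path
    obtain ⟨hcard, hcsPS, r, hrS, hrsPT⟩ := hendsA hb
    set S' := (S \ PS) ∪ PT with hS'def
    set T' := (T \ PT) ∪ PS with hT'def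
    have hS'card : S'.card = k₁ := by
      rw [hS'def, Finset.card_union_of_disjoint dST1, Finset.card_sdiff_of_subset hPS]
      omega
    have hT'card : T'.card = k₂ := by
      rw [hT'def, Finset.card_union_of_disjoint dTS1, Finset.card_sdiff_of_subset hPT]
      omega
    have hS'assign : IsAssign m n k₁ S' := by
      refine ⟨hS'card, ?_, hexS⟩
      intro p hp
      rw [hS'def, Finset.mem_union] at hp
      rcases hp with hp | hp
      · exact hSbnd p (Finset.mem_sdiff.1 hp).1
      · exact hTbnd p (hPT hp)
    have hT'assign : IsAssign m n k₂ T' := by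
      refine ⟨hT'card, ?_, hexT⟩
      intro p hp
      rw [hT'def, Finset.mem_union] at hp
      rcases hp with hp | hp
      · exact hTbnd p (Finset.mem_sdiff.1 hp).1
      · exact hSbnd p (hPS hp)
    have eS' : aval X S' = aval X S - aval X PS + aval X PT := by
      rw [hS'def, aval_union dST1, aval_sdiff hPS]
    have eT' : aval X T' = aval X T - aval X PT + aval X PS := by
      rw [hT'def, aval_union dTS1, aval_sdiff hPT]
    have i1 := hT.2 _ hT'assign
    have i2 := hS.2 _ hS'assign
    have hminS' : MinAssign m n k₁ X S' := by
      refine ⟨hS'assign, fun W hW => ?_⟩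
      have : aval X S' = aval X S := by linarith
      rw [this]; exact hS.2 _ hW
    have hminT' : MinAssign m n k₂ X T' := by
      refine ⟨hT'assign, fun W hW => ?_⟩
      have : aval X T' = aval X T := by linarith
      rw [this]; exact hT.2 _ hW
    have hPST' : PS ⊆ T' := by
      rw [hT'def]; intro c hc; exact Finset.mem_union_right _ hc
    refine ⟨S', T', hminS', hminT', ?_, ?_, ?_, ?_⟩
    · intro v hv
      rw [Finset.mem_sdiff] at hv
      have hvS' := hv.1
      rw [hS'def, rset_union, Finset.mem_union] at hvS'
      rcases hvS' with hvS' | hvS'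
      · rw [Finset.mem_erase]
        refine ⟨?_, Finset.mem_sdiff.2 ⟨rset_mono (Finset.sdiff_subset) hvS', hv.2⟩⟩
        intro he
        exact hu_not_SPS (he ▸ hvS')
      · exact absurd (rset_mono hPT hvS') hv.2
    · intro v hv
      rw [Finset.mem_sdiff] at hv
      have hvS' := hv.1
      rw [hS'def, cset_union, Finset.mem_union] at hvS'
      rcases hvS' with hvS' | hvS'
      · exact Finset.mem_sdiff.2 ⟨cset_mono (Finset.sdiff_subset) hvS', hv.2⟩
      · exact absurd (cset_mono hPT hvS') hv.2
    · intro v hv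
      rw [Finset.mem_sdiff] at hv
      have hvT' : v ∉ rset T' := hv.2
      rw [Finset.mem_erase]
      constructor
      · intro he
        exact hvT' (rset_mono hPST' (he ▸ huPS))
      · refine Finset.mem_sdiff.2 ⟨hv.1, ?_⟩
        intro hvT
        obtain ⟨c, hcT, hcv⟩ := mem_rset.1 hvT
        by_cases hcPT : c ∈ PT
        · have hvm : v ∈ rset PT := hcv ▸ mem_rset_of hcPT
          have h2 := hrsPT hvm
          rw [Finset.mem_union] at h2
          rcases h2 with h2 | h2
          · exact hvT' (rset_mono hPST' (rset_mono (Finset.erase_subset _ _) h2))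
          · rw [Finset.mem_singleton] at h2
            exact hrS (h2 ▸ hv.1)
        · exact hvT' (by
            rw [hT'def, rset_union]
            exact Finset.mem_union_left _
              (rset_mono (Finset.Subset.refl _) (hcv ▸ mem_rset_of
                (Finset.mem_sdiff.2 ⟨hcT, hcPT⟩))))
    · intro v hv
      rw [Finset.mem_sdiff] at hv
      refine Finset.mem_sdiff.2 ⟨hv.1, ?_⟩
      intro hvT
      obtain ⟨c, hcT, hcv⟩ := mem_cset.1 hvT
      by_cases hcPT : c ∈ PT
      · have hvm : v ∈ cset PT := hcv ▸ mem_cset_of hcPT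
        exact hv.2 (cset_mono hPST' (hcolsPT hvm))
      · exact hv.2 (by
          rw [hT'def, cset_union]
          exact Finset.mem_union_left _ (hcv ▸ mem_cset_of (Finset.mem_sdiff.2 ⟨hcT, hcPT⟩)))


-- ============ transposed step ============

lemma step_both_col {m n k₁ k₂ : ℕ} {X : ℕ → ℕ → ℝ} {S T : Finset Cell} (hk : k₁ ≤ k₂)
    (hS : MinAssign m n k₁ X S) (hT : MinAssign m n k₂ X T) {u : ℕ}
    (hu : u ∈ cset S \ cset T) :
    ∃ S' T', MinAssign m n k₁ X S' ∧ MinAssign m n k₂ X T' ∧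
      cset S' \ cset T ⊆ (cset S \ cset T).erase u ∧
      rset S' \ rset T ⊆ rset S \ rset T ∧
      cset S \ cset T' ⊆ (cset S \ cset T).erase u ∧
      rset S \ rset T' ⊆ rset S \ rset T := by
  have hu' : u ∈ rset (tr S) \ rset (tr T) := by
    rw [rset_tr, rset_tr]; exact hu
  obtain ⟨S₁, T₁, hS₁, hT₁, m1, m2, m3, m4⟩ :=
    step_both_row hk (minAssign_tr hS) (minAssign_tr hT) hu'
  refine ⟨tr S₁, tr T₁, minAssign_tr hS₁, minAssign_tr hT₁, ?_, ?_, ?_, ?_⟩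
  · rw [cset_tr, ← rset_tr (S := T), ← rset_tr (S := S)]
    exact m1
  · rw [rset_tr, ← cset_tr (S := T), ← cset_tr (S := S)]
    exact m2
  · rw [cset_tr, ← rset_tr (S := S), ← rset_tr (S := T)]
    exact m3
  · rw [rset_tr, ← cset_tr (S := S), ← cset_tr (S := T)]
    exact m4

-- ============ main nesting lemmas ============

lemma main_down {m n k₁ k₂ : ℕ} {X : ℕ → ℕ → ℝ} {T : Finset Cell} (hk : k₁ ≤ k₂)
    (hT : MinAssign m n k₂ X T) :
    ∀ d (S : Finset Cell), MinAssign m n k₁ X S →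
      (rset S \ rset T).card + (cset S \ cset T).card ≤ d →
      ∃ S', MinAssign m n k₁ X S' ∧ rset S' ⊆ rset T ∧ cset S' ⊆ cset T := by
  intro d
  induction d with
  | zero =>
    intro S hS hle
    refine ⟨S, hS, ?_, ?_⟩
    · rw [← Finset.sdiff_eq_empty_iff_subset]
      rw [← Finset.card_eq_zero]
      omega
    · rw [← Finset.sdiff_eq_empty_iff_subset]
      rw [← Finset.card_eq_zero]
      omega
  | succ d ih =>
    intro S hS hle
    rcases Finset.eq_empty_or_nonempty (rset S \ rset T) with he | ⟨u, hu⟩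
    · rcases Finset.eq_empty_or_nonempty (cset S \ cset T) with he2 | ⟨u, hu⟩
      · exact ⟨S, hS, Finset.sdiff_eq_empty_iff_subset.1 he,
          Finset.sdiff_eq_empty_iff_subset.1 he2⟩
      · obtain ⟨S', _, hS', _, m1, m2, _, _⟩ := step_both_col hk hS hT hu
        apply ih S' hS'
        have c1 : (cset S' \ cset T).card ≤ ((cset S \ cset T).erase u).card :=
          Finset.card_le_card m1
        rw [Finset.card_erase_of_mem hu] at c1
        have c2 : (rset S' \ rset T).card ≤ (rset S \ rset T).card :=
          Finset.card_le_card m2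
        have c3 : 1 ≤ (cset S \ cset T).card := Finset.card_pos.2 ⟨u, hu⟩
        omega
    · obtain ⟨S', _, hS', _, m1, m2, _, _⟩ := step_both_row hk hS hT hu
      apply ih S' hS'
      have c1 : (rset S' \ rset T).card ≤ ((rset S \ rset T).erase u).card :=
        Finset.card_le_card m1
      rw [Finset.card_erase_of_mem hu] at c1
      have c2 : (cset S' \ cset T).card ≤ (cset S \ cset T).card :=
        Finset.card_le_card m2
      have c3 : 1 ≤ (rset S \ rset T).card := Finset.card_pos.2 ⟨u, hu⟩
      omega

lemma main_up {m n k₁ k₂ : ℕ} {X : ℕ → ℕ → ℝ} {S : Finset Cell} (hk : k₁ ≤ k₂)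
    (hS : MinAssign m n k₁ X S) :
    ∀ d (T : Finset Cell), MinAssign m n k₂ X T →
      (rset S \ rset T).card + (cset S \ cset T).card ≤ d →
      ∃ T', MinAssign m n k₂ X T' ∧ rset S ⊆ rset T' ∧ cset S ⊆ cset T' := by
  intro d
  induction d with
  | zero =>
    intro T hT hle
    refine ⟨T, hT, ?_, ?_⟩
    · rw [← Finset.sdiff_eq_empty_iff_subset, ← Finset.card_eq_zero]
      omega
    · rw [← Finset.sdiff_eq_empty_iff_subset, ← Finset.card_eq_zero]
      omega
  | succ d ih =>
    intro T hT hle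
    rcases Finset.eq_empty_or_nonempty (rset S \ rset T) with he | ⟨u, hu⟩
    · rcases Finset.eq_empty_or_nonempty (cset S \ cset T) with he2 | ⟨u, hu⟩
      · exact ⟨T, hT, Finset.sdiff_eq_empty_iff_subset.1 he,
          Finset.sdiff_eq_empty_iff_subset.1 he2⟩
      · obtain ⟨_, T', _, hT', _, _, m1, m2⟩ := step_both_col hk hS hT hu
        apply ih T' hT'
        have c1 : (cset S \ cset T').card ≤ ((cset S \ cset T).erase u).card :=
          Finset.card_le_card m1
        rw [Finset.card_erase_of_mem hu] at c1
        have c2 : (rset S \ rset T').card ≤ (rset S \ rset T).card :=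
          Finset.card_le_card m2
        have c3 : 1 ≤ (cset S \ cset T).card := Finset.card_pos.2 ⟨u, hu⟩
        omega
    · obtain ⟨_, T', _, hT', _, _, m1, m2⟩ := step_both_row hk hS hT hu
      apply ih T' hT'
      have c1 : (rset S \ rset T').card ≤ ((rset S \ rset T).erase u).card :=
        Finset.card_le_card m1
      rw [Finset.card_erase_of_mem hu] at c1
      have c2 : (cset S \ cset T').card ≤ (cset S \ cset T).card :=
        Finset.card_le_card m2
      have c3 : 1 ≤ (rset S \ rset T).card := Finset.card_pos.2 ⟨u, hu⟩
      omega

-- ============ the theorem ============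

/-- The nesting lemma: minimum assignments of different sizes lie in nested submatrices. -/
theorem nesting_lemma (k₁ k₂ m n : ℕ) (hk₁ : 0 < k₁) (h₁₂ : k₁ ≤ k₂) (h₂m : k₂ ≤ m)
    (hmn : m ≤ n) (X : ℕ → ℕ → ℝ) (hX : ∀ i < m, ∀ j < n, 0 ≤ X i j) :
    -- (i) upward nesting
    ((∀ R₁ C₁ : Finset ℕ, R₁ ⊆ Finset.range m → C₁ ⊆ Finset.range n →
        R₁.card = k₁ → C₁.card = k₁ →
        (∃ S, MinAssign m n k₁ X S ∧ S ⊆ R₁ ×ˢ C₁) →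
        ∃ R₂ C₂ : Finset ℕ, R₁ ⊆ R₂ ∧ C₁ ⊆ C₂ ∧ R₂ ⊆ Finset.range m ∧ C₂ ⊆ Finset.range n ∧
          R₂.card = k₂ ∧ C₂.card = k₂ ∧
          ∃ T, MinAssign m n k₂ X T ∧ T ⊆ R₂ ×ˢ C₂) ∧
    -- (ii) downward nesting
    (∀ R₂ C₂ : Finset ℕ, R₂ ⊆ Finset.range m → C₂ ⊆ Finset.range n →
        R₂.card = k₂ → C₂.card = k₂ →
        (∃ T, MinAssign m n k₂ X T ∧ T ⊆ R₂ ×ˢ C₂) →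
        ∃ R₁ C₁ : Finset ℕ, R₁ ⊆ R₂ ∧ C₁ ⊆ C₂ ∧ R₁.card = k₁ ∧ C₁.card = k₁ ∧
          ∃ S, MinAssign m n k₁ X S ∧ S ⊆ R₁ ×ˢ C₁)) := by
  constructor
  · -- (i) upward nesting
    rintro R₁ C₁ hR₁ hC₁ hRc hCc ⟨S, hSmin, hSsub⟩
    obtain ⟨T₀, hT₀⟩ := exists_minAssign h₂m hmn X (k := k₂)
    obtain ⟨T', hT', hrows, hcols⟩ := main_up h₁₂ hSmin _ T₀ hT₀ (le_refl _)
    have hrsub : rset S ⊆ R₁ := by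
      intro i hi
      obtain ⟨c, hc, rfl⟩ := mem_rset.1 hi
      exact (Finset.mem_product.1 (hSsub hc)).1
    have hcsub : cset S ⊆ C₁ := by
      intro j hj
      obtain ⟨c, hc, rfl⟩ := mem_cset.1 hj
      exact (Finset.mem_product.1 (hSsub hc)).2
    have hreq : rset S = R₁ := by
      apply Finset.eq_of_subset_of_card_le hrsub
      rw [rset_card hSmin.1.pinj, hSmin.1.1, hRc]
    have hceq : cset S = C₁ := by
      apply Finset.eq_of_subset_of_card_le hcsub
      rw [cset_card hSmin.1.pinj, hSmin.1.1, hCc]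
    refine ⟨rset T', cset T', hreq ▸ hrows, hceq ▸ hcols, ?_, ?_, ?_, ?_, T', hT', ?_⟩
    · intro i hi
      obtain ⟨c, hc, rfl⟩ := mem_rset.1 hi
      exact Finset.mem_range.2 (hT'.1.2.1 c hc).1
    · intro j hj
      obtain ⟨c, hc, rfl⟩ := mem_cset.1 hj
      exact Finset.mem_range.2 (hT'.1.2.1 c hc).2
    · rw [rset_card hT'.1.pinj, hT'.1.1]
    · rw [cset_card hT'.1.pinj, hT'.1.1]
    · intro c hc
      exact Finset.mem_product.2 ⟨mem_rset_of hc, mem_cset_of hc⟩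
  · -- (ii) downward nesting
    rintro R₂ C₂ hR₂ hC₂ hRc hCc ⟨T, hTmin, hTsub⟩
    obtain ⟨S₀, hS₀⟩ := exists_minAssign (le_trans h₁₂ h₂m) hmn X (k := k₁)
    obtain ⟨S', hS', hrows, hcols⟩ := main_down h₁₂ hTmin _ S₀ hS₀ (le_refl _)
    refine ⟨rset S', cset S', ?_, ?_, ?_, ?_, S', hS', ?_⟩
    · intro i hi
      have := hrows hi
      obtain ⟨c, hc, rfl⟩ := mem_rset.1 this
      exact (Finset.mem_product.1 (hTsub hc)).1
    · intro j hj
      have := hcols hj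
      obtain ⟨c, hc, rfl⟩ := mem_cset.1 this
      exact (Finset.mem_product.1 (hTsub hc)).2
    · rw [rset_card hS'.1.pinj, hS'.1.1]
    · rw [cset_card hS'.1.pinj, hS'.1.1]
    · intro c hc
      exact Finset.mem_product.2 ⟨mem_rset_of hc, mem_cset_of hc⟩
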